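/- For every u ∈ 𝒟 and every real t ≥ 0 one has I(u) ≥ I(t·u) + ((1−t^q)/q)·⟨I'(u),u⟩ + ((1−t^p)/p − (1−t^q)/q)·(‖u⁺‖^p + ‖u⁻‖^p). -/

import Mathlib

noncomputable section

open Real Filter Set

namespace DPLap

/-- Forward difference operator. -/
def dlt (u : ℤ → ℝ) (n : ℤ) : ℝ := u (n + 1) - u n

/-- Positive part `u⁺`. -/
def pos (u : ℤ → ℝ) : ℤ → ℝ := fun n => max (u n) 0

/-- Negative part `u⁻`. -/
def neg (u : ℤ → ℝ) : ℤ → ℝ := fun n => min (u n) 0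

/-- Summand of the `E`-norm. -/
def nsum (a b : ℤ → ℝ) (p : ℕ) (u : ℤ → ℝ) (n : ℤ) : ℝ :=
  a n * |dlt u n| ^ p + b n * |u n| ^ p

/-- Membership in the space `E`. -/
def memE (a b : ℤ → ℝ) (p : ℕ) (u : ℤ → ℝ) : Prop :=
  Summable (nsum a b p u)

/-- The norm `‖u‖ = (∑ [a|Δu|^p + b|u|^p])^(1/p)`. -/
def dnorm (a b : ℤ → ℝ) (p : ℕ) (u : ℤ → ℝ) : ℝ :=
  (∑' n : ℤ, nsum a b p u n) ^ ((p : ℝ)⁻¹)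

/-- Summand `c(n)|u(n)|^q ln(|u(n)|^r)` of the logarithmic term (with the
convention `0^q ln 0 = 0`, automatic from `Real.rpow` and `Real.log`). -/
def logSummand (c : ℤ → ℝ) (q r : ℝ) (u : ℤ → ℝ) (n : ℤ) : ℝ :=
  c n * |u n| ^ q * Real.log (|u n| ^ r)

/-- Membership in `𝒟`. -/
def memD (a b c : ℤ → ℝ) (p : ℕ) (q r : ℝ) (u : ℤ → ℝ) : Prop :=
  memE a b p u ∧ Summable (logSummand c q r u)

/-- The energy functional `I`. -/
def En (a b c : ℤ → ℝ) (p : ℕ) (q r : ℝ) (u : ℤ → ℝ) : ℝ :=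
  (1 / (p : ℝ)) * dnorm a b p u ^ p
    + (r / q ^ 2) * ∑' n : ℤ, c n * |u n| ^ q
    - (1 / q) * ∑' n : ℤ, logSummand c q r u n

/-- The pairing `⟨I'(u), v⟩`. -/
def pr (a b c : ℤ → ℝ) (p : ℕ) (q r : ℝ) (u v : ℤ → ℝ) : ℝ :=
  (∑' n : ℤ, (a n * |dlt u n| ^ (p - 2) * dlt u n * dlt v n
      + b n * |u n| ^ (p - 2) * u n * v n))
    - ∑' n : ℤ, c n * |u n| ^ (q - 2) * u n * v n * Real.log (|u n| ^ r)

/-- The Nehari set `𝒩`. -/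
def Nset (a b c : ℤ → ℝ) (p : ℕ) (q r : ℝ) : Set (ℤ → ℝ) :=
  {u | memD a b c p q r u ∧ u ≠ 0 ∧ pr a b c p q r u u = 0}

/-- The sign-changing Nehari set `ℳ`. -/
def Mset (a b c : ℤ → ℝ) (p : ℕ) (q r : ℝ) : Set (ℤ → ℝ) :=
  {u | memD a b c p q r u ∧ pos u ≠ 0 ∧ neg u ≠ 0 ∧
      pr a b c p q r u (pos u) = 0 ∧ pr a b c p q r u (neg u) = 0}

/-- `m* = inf_ℳ I`. -/
def mStar (a b c : ℤ → ℝ) (p : ℕ) (q r : ℝ) : ℝ :=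
  sInf (En a b c p q r '' Mset a b c p q r)

/-- `c* = inf_𝒩 I`. -/
def cStar (a b c : ℤ → ℝ) (p : ℕ) (q r : ℝ) : ℝ :=
  sInf (En a b c p q r '' Nset a b c p q r)

lemma nsum_nonneg {a b : ℤ → ℝ} (ha : ∀ n, 0 < a n) (hb : ∀ n, 0 < b n)
    (p : ℕ) (u : ℤ → ℝ) (n : ℤ) : 0 ≤ nsum a b p u n := by
  have h1 := (ha n).le; have h2 := (hb n).le
  unfold nsum; positivity

lemma dnorm_pow {a b : ℤ → ℝ} (ha : ∀ n, 0 < a n) (hb : ∀ n, 0 < b n)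
    {p : ℕ} (hp : p ≠ 0) (u : ℤ → ℝ) :
    dnorm a b p u ^ p = ∑' n : ℤ, nsum a b p u n := by
  have h0 : 0 ≤ ∑' n : ℤ, nsum a b p u n := tsum_nonneg (nsum_nonneg ha hb p u)
  rw [dnorm, ← Real.rpow_natCast ((∑' n : ℤ, nsum a b p u n) ^ ((p:ℝ))⁻¹) p,
    ← Real.rpow_mul h0, inv_mul_cancel₀ (by exact_mod_cast hp), Real.rpow_one]

lemma phi_nonneg {p : ℕ} (hp2 : 2 ≤ p) {q t : ℝ} (hpq : (p:ℝ) < q) (ht : 0 ≤ t) :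
    0 ≤ (1 - t ^ p) / (p : ℝ) - (1 - t ^ q) / q := by
  have hp0 : (0:ℝ) < p := by
    have : (2:ℝ) ≤ (p:ℝ) := by exact_mod_cast hp2
    linarith
  have hq0 : (0:ℝ) < q := lt_trans hp0 hpq
  have w1 : (0:ℝ) ≤ (p:ℝ)/q := by positivity
  have w2 : (0:ℝ) ≤ (q - p)/q := by
    apply div_nonneg (by linarith) hq0.le
  have hsum : (p:ℝ)/q + (q - (p:ℝ))/q = 1 := by field_simp; ring
  have hgm := Real.geom_mean_le_arith_mean2_weighted w1 w2
    (Real.rpow_nonneg ht q) zero_le_one hsum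
  have hrw : (t ^ q) ^ ((p:ℝ)/q) = t ^ p := by
    rw [← Real.rpow_natCast t p, ← Real.rpow_mul ht]
    congr 1
    field_simp
  rw [hrw, Real.one_rpow, mul_one] at hgm
  -- hgm : t ^ p ≤ p/q * t^q + (q-p)/q
  rw [sub_nonneg, div_le_div_iff₀ hq0 hp0]
  have h := mul_le_mul_of_nonneg_left hgm hq0.le
  have e : q * ((p:ℝ) / q * t ^ q + (q - (p:ℝ)) / q * 1)
      = (p:ℝ) * t ^ q + (q - (p:ℝ)) := by field_simp
  rw [e] at h
  nlinarith [h]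

lemma g_nonneg {q t : ℝ} (hq : 0 < q) (ht : 0 ≤ t) :
    0 ≤ 1 - t ^ q + q * t ^ q * Real.log t := by
  rcases eq_or_lt_of_le ht with h | h
  · rw [← h, Real.zero_rpow hq.ne']; simp
  · have hs : 0 < t ^ q := Real.rpow_pos_of_pos h q
    have hlog : Real.log (t ^ q) = q * Real.log t := Real.log_rpow h q
    have h1 : Real.log (t ^ q)⁻¹ ≤ (t ^ q)⁻¹ - 1 :=
      Real.log_le_sub_one_of_pos (by positivity)
    rw [Real.log_inv] at h1
    have h2 : t ^ q * (t ^ q)⁻¹ = 1 := mul_inv_cancel₀ hs.ne'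
    have h3 := mul_le_mul_of_nonneg_left h1 hs.le
    -- h3 : t^q * (-log (t^q)) ≤ t^q * ((t^q)⁻¹ - 1)
    nlinarith [h3, hlog]

lemma abs_add_of_mul_nonneg {x y : ℝ} (hxy : 0 ≤ x * y) : |x + y| = |x| + |y| := by
  rcases le_total 0 x with hx | hx <;> rcases le_total 0 y with hy | hy
  · rw [abs_of_nonneg hx, abs_of_nonneg hy, abs_of_nonneg (by linarith)]
  · have h0 : x * y = 0 := le_antisymm (mul_nonpos_iff.mpr (Or.inl ⟨hx, hy⟩)) hxy
    rcases mul_eq_zero.mp h0 with h | h <;> simp [h]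
  · have h0 : x * y = 0 := le_antisymm (mul_nonpos_iff.mpr (Or.inr ⟨hx, hy⟩)) hxy
    rcases mul_eq_zero.mp h0 with h | h <;> simp [h]
  · rw [abs_of_nonpos hx, abs_of_nonpos hy, abs_of_nonpos (by linarith)]; ring

lemma pow_abs_add_le {p : ℕ} (hp : p ≠ 0) {x y : ℝ} (hxy : 0 ≤ x * y) :
    |x| ^ p + |y| ^ p ≤ |x + y| ^ p := by
  rw [abs_add_of_mul_nonneg hxy]
  exact pow_add_pow_le (abs_nonneg x) (abs_nonneg y) hp

lemma dlt_pos_neg_mul_nonneg (u : ℤ → ℝ) (n : ℤ) :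
    0 ≤ dlt (pos u) n * dlt (neg u) n := by
  simp only [dlt, pos, neg]
  rcases le_total (u n) 0 with h1 | h1 <;> rcases le_total (u (n+1)) 0 with h2 | h2
  · rw [max_eq_right h1, max_eq_right h2]; simp
  · rw [max_eq_right h1, min_eq_left h1, min_eq_right h2]
    have h3 : 0 ≤ max (u (n+1)) 0 := le_max_right _ _
    nlinarith
  · rw [max_eq_left h1, max_eq_right h2, min_eq_right h1, min_eq_left h2]
    nlinarith
  · rw [min_eq_right h1, min_eq_right h2]; simp

lemma pos_add_neg (u : ℤ → ℝ) (n : ℤ) : pos u n + neg u n = u n := by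
  show max (u n) 0 + min (u n) 0 = u n
  rw [max_add_min, add_zero]

lemma nsum_pos_neg_le {a b : ℤ → ℝ} (ha : ∀ n, 0 < a n) (hb : ∀ n, 0 < b n)
    {p : ℕ} (hp : p ≠ 0) (u : ℤ → ℝ) (n : ℤ) :
    nsum a b p (pos u) n + nsum a b p (neg u) n ≤ nsum a b p u n := by
  unfold nsum
  have hsum : dlt (pos u) n + dlt (neg u) n = dlt u n := by
    simp only [dlt]
    have e1 := pos_add_neg u n
    have e2 := pos_add_neg u (n+1)
    linarith
  have h1 : |dlt (pos u) n| ^ p + |dlt (neg u) n| ^ p ≤ |dlt u n| ^ p := by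
    rw [← hsum]
    exact pow_abs_add_le hp (dlt_pos_neg_mul_nonneg u n)
  have h2 : |pos u n| ^ p + |neg u n| ^ p ≤ |u n| ^ p := by
    rcases le_total (u n) 0 with h | h
    · simp only [pos, neg, max_eq_right h, min_eq_left h]
      rw [abs_zero, zero_pow hp]; linarith
    · simp only [pos, neg, max_eq_left h, min_eq_right h]
      rw [abs_zero, zero_pow hp]; linarith
  have := mul_le_mul_of_nonneg_left h1 (ha n).le
  have := mul_le_mul_of_nonneg_left h2 (hb n).le
  nlinarith

theorem stmt6 (p : ℕ) (hp2 : 2 ≤ p) (hpe : Even p)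
    (q r : ℝ) (hpq : (p : ℝ) < q) (hr : 1 ≤ r)
    (a b c : ℤ → ℝ)
    (ha : ∀ n, 0 < a n) (hb : ∀ n, 0 < b n) (hc : ∀ n, 0 < c n)
    (b0 : ℝ) (hb0 : 0 < b0) (hbb : ∀ n, b0 ≤ b n)
    (hbinf : Tendsto b cofinite atTop)
    (c0 : ℝ) (hc0 : 0 < c0) (hcc : ∀ n, c n ≤ c0)
    (hcsum : Summable c)
    (u : ℤ → ℝ) (hu : memD a b c p q r u) (t : ℝ) (ht : 0 ≤ t) :
    En a b c p q r (fun n => t * u n)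
        + ((1 - t ^ q) / q) * pr a b c p q r u u
        + ((1 - t ^ p) / (p : ℝ) - (1 - t ^ q) / q)
            * (dnorm a b p (pos u) ^ p + dnorm a b p (neg u) ^ p)
      ≤ En a b c p q r u := by
  have hp0 : p ≠ 0 := by omega
  have hp0R : (0:ℝ) < p := by
    have : (2:ℝ) ≤ (p:ℝ) := by exact_mod_cast hp2
    linarith
  have hq0 : (0:ℝ) < q := lt_trans hp0R hpq
  have hq2 : (2:ℝ) < q := by
    have : (2:ℝ) ≤ (p:ℝ) := by exact_mod_cast hp2
    linarith
  set N := ∑' n : ℤ, nsum a b p u n with hN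
  set S := ∑' n : ℤ, c n * |u n| ^ q with hSdef
  set L := ∑' n : ℤ, logSummand c q r u n with hL
  set Np := ∑' n : ℤ, nsum a b p (pos u) n with hNp
  set Nn := ∑' n : ℤ, nsum a b p (neg u) n with hNn
  -- summability of c n * |u n|^q
  have hbu : Summable (fun n => b n * |u n| ^ p) := by
    apply Summable.of_nonneg_of_le
      (fun n => mul_nonneg (hb n).le (by positivity))
      (fun n => ?_) hu.1
    unfold nsum
    have : 0 ≤ a n * |dlt u n| ^ p := mul_nonneg (ha n).le (by positivity)
    linarith
  have hup : Summable (fun n => |u n| ^ p) := by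
    apply Summable.of_nonneg_of_le
      (fun n => pow_nonneg (abs_nonneg (u n)) p)
      (fun n => ?_) (hbu.mul_left b0⁻¹)
    rw [← mul_assoc]
    have h1 : (1:ℝ) ≤ b0⁻¹ * b n := by
      rw [← inv_mul_cancel₀ hb0.ne']
      exact mul_le_mul_of_nonneg_left (hbb n) (by positivity)
    nlinarith [pow_nonneg (abs_nonneg (u n)) p]
  have hcq : Summable (fun n => c n * |u n| ^ q) := by
    apply Summable.of_norm_bounded_eventually hcsum
    have hten : ∀ᶠ n in cofinite, |u n| ^ p < (1:ℝ) := by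
      have := hup.tendsto_cofinite_zero
      exact this.eventually_lt_const (by norm_num)
    filter_upwards [hten] with n hn
    have hu1 : |u n| ≤ 1 := by
      by_contra hcon
      push_neg at hcon
      have := one_lt_pow₀ hcon hp0
      linarith
    have huq : |u n| ^ q ≤ 1 := Real.rpow_le_one (abs_nonneg _) hu1 hq0.le
    have h0 : (0:ℝ) ≤ |u n| ^ q := Real.rpow_nonneg (abs_nonneg _) q
    rw [Real.norm_eq_abs, abs_of_nonneg (mul_nonneg (hc n).le h0)]
    nlinarith [(hc n).le]
  -- basic nonnegativity
  have hS : 0 ≤ S := tsum_nonneg fun n =>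
    mul_nonneg (hc n).le (Real.rpow_nonneg (abs_nonneg _) q)
  -- norm identities
  have eN : dnorm a b p u ^ p = N := dnorm_pow ha hb hp0 u
  have eNp : dnorm a b p (pos u) ^ p = Np := dnorm_pow ha hb hp0 (pos u)
  have eNn : dnorm a b p (neg u) ^ p = Nn := dnorm_pow ha hb hp0 (neg u)
  have eNt : dnorm a b p (fun n => t * u n) ^ p = t ^ p * N := by
    rw [dnorm_pow ha hb hp0]
    calc ∑' n : ℤ, nsum a b p (fun m => t * u m) n
        = ∑' n : ℤ, t ^ p * nsum a b p u n := by
          apply tsum_congr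
          intro n
          unfold nsum dlt
          have e1 : t * u (n+1) - t * u n = t * (u (n+1) - u n) := by ring
          rw [e1, abs_mul, abs_mul, abs_of_nonneg ht, mul_pow, mul_pow]
          ring
      _ = t ^ p * N := tsum_mul_left
  -- the q-power sum identity
  have eSt : ∑' n : ℤ, c n * |t * u n| ^ q = t ^ q * S := by
    calc ∑' n : ℤ, c n * |t * u n| ^ q
        = ∑' n : ℤ, t ^ q * (c n * |u n| ^ q) := by
          apply tsum_congr
          intro n
          rw [abs_mul, abs_of_nonneg ht, Real.mul_rpow ht (abs_nonneg _)]
          ring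
      _ = t ^ q * S := tsum_mul_left
  -- pointwise log identity
  have ptD : ∀ n : ℤ, logSummand c q r (fun m => t * u m) n
      = t ^ q * logSummand c q r u n
        + (t ^ q * r * Real.log t) * (c n * |u n| ^ q) := by
    intro n
    unfold logSummand
    rcases eq_or_lt_of_le ht with h0t | h0t
    · rw [← h0t]
      simp [Real.zero_rpow hq0.ne']
    · rcases eq_or_ne (u n) 0 with h0u | h0u
      · simp [h0u, Real.zero_rpow hq0.ne']
      · have hau : 0 < |u n| := abs_pos.mpr h0u
        have htu : 0 < t * |u n| := by positivity
        rw [abs_mul, abs_of_pos h0t, Real.mul_rpow h0t.le hau.le,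
          Real.log_rpow htu r, Real.log_rpow hau r,
          Real.log_mul h0t.ne' hau.ne']
        ring
  have eLt : ∑' n : ℤ, logSummand c q r (fun m => t * u m) n
      = t ^ q * L + (t ^ q * r * Real.log t) * S := by
    rw [tsum_congr ptD,
      Summable.tsum_add (hu.2.mul_left _) (hcq.mul_left _), tsum_mul_left, tsum_mul_left]
  -- pr u u = N - L
  have ePr : pr a b c p q r u u = N - L := by
    unfold pr
    congr 1
    · apply tsum_congr
      intro n
      have e1 : ∀ x : ℝ, |x| ^ (p - 2) * x * x = |x| ^ p := by
        intro x
        rw [mul_assoc, ← abs_mul_abs_self x, ← pow_two,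
          ← pow_add, Nat.sub_add_cancel hp2]
      unfold nsum
      calc a n * |dlt u n| ^ (p - 2) * dlt u n * dlt u n
            + b n * |u n| ^ (p - 2) * u n * u n
          = a n * (|dlt u n| ^ (p - 2) * dlt u n * dlt u n)
            + b n * (|u n| ^ (p - 2) * u n * u n) := by ring
        _ = a n * |dlt u n| ^ p + b n * |u n| ^ p := by
            rw [e1 (dlt u n), e1 (u n)]
    · apply tsum_congr
      intro n
      unfold logSummand
      rcases eq_or_ne (u n) 0 with h0u | h0u
      · simp [h0u, Real.zero_rpow hq0.ne', Real.zero_rpow (show r ≠ 0 by linarith)]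
      · have hau : 0 < |u n| := abs_pos.mpr h0u
        have e2 : |u n| ^ (q - 2) * u n * u n = |u n| ^ q := by
          rw [mul_assoc, ← abs_mul_abs_self (u n), ← pow_two,
            ← Real.rpow_two, ← Real.rpow_add hau]
          norm_num
        calc c n * |u n| ^ (q - 2) * u n * u n * Real.log (|u n| ^ r)
            = c n * (|u n| ^ (q - 2) * u n * u n) * Real.log (|u n| ^ r) := by
              ring
          _ = c n * |u n| ^ q * Real.log (|u n| ^ r) := by rw [e2]
  -- Np + Nn ≤ N
  have hs_pos : Summable (nsum a b p (pos u)) := by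
    apply Summable.of_nonneg_of_le (nsum_nonneg ha hb p (pos u)) (fun n => ?_) hu.1
    have h1 := nsum_pos_neg_le ha hb hp0 u n
    have h2 := nsum_nonneg ha hb p (neg u) n
    linarith
  have hs_neg : Summable (nsum a b p (neg u)) := by
    apply Summable.of_nonneg_of_le (nsum_nonneg ha hb p (neg u)) (fun n => ?_) hu.1
    have h1 := nsum_pos_neg_le ha hb hp0 u n
    have h2 := nsum_nonneg ha hb p (pos u) n
    linarith
  have hNS : Np + Nn ≤ N := by
    rw [hNp, hNn, ← Summable.tsum_add hs_pos hs_neg]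
    exact Summable.tsum_le_tsum (fun n => nsum_pos_neg_le ha hb hp0 u n)
      (hs_pos.add hs_neg) hu.1
  -- unfold the functionals
  have eEnt : En a b c p q r (fun n => t * u n)
      = (1/(p:ℝ)) * (t ^ p * N) + (r/q^2) * (t ^ q * S)
        - (1/q) * (t ^ q * L + (t ^ q * r * Real.log t) * S) := by
    simp only [En]
    rw [eNt, eSt, eLt]
  have eEnu : En a b c p q r u
      = (1/(p:ℝ)) * N + (r/q^2) * S - (1/q) * L := by
    rw [En, eN]
  -- coefficient facts
  have hphi : 0 ≤ (1 - t ^ p) / (p:ℝ) - (1 - t ^ q) / q := phi_nonneg hp2 hpq ht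
  have hg : 0 ≤ 1 - t ^ q + q * t ^ q * Real.log t := g_nonneg hq0 ht
  have hφP : ((1 - t ^ p) / (p:ℝ) - (1 - t ^ q) / q) * (Np + Nn)
      ≤ ((1 - t ^ p) / (p:ℝ) - (1 - t ^ q) / q) * N :=
    mul_le_mul_of_nonneg_left hNS hphi
  have hgS : 0 ≤ (r/q^2) * ((1 - t ^ q + q * t ^ q * Real.log t) * S) := by
    have hr0 : (0:ℝ) ≤ r := by linarith
    have : (0:ℝ) ≤ r/q^2 := by positivity
    exact mul_nonneg this (mul_nonneg hg hS)
  have key : (1/(p:ℝ)) * (t ^ p * N) + (r/q^2) * (t ^ q * S)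
        - (1/q) * (t ^ q * L + (t ^ q * r * Real.log t) * S)
        + ((1 - t ^ q) / q) * (N - L)
        + ((1 - t ^ p) / (p:ℝ) - (1 - t ^ q) / q) * N
        + (r/q^2) * ((1 - t ^ q + q * t ^ q * Real.log t) * S)
      = (1/(p:ℝ)) * N + (r/q^2) * S - (1/q) * L := by
    field_simp
    ring
  rw [eEnt, eEnu, ePr, eNp, eNn]
  linarith [hφP, hgS, key]

end DPLap
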